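/- Let V be an r-dimensional L-vector space with r ≥ 3 and let U be a 2-scattered K-subspace of V. If W is a K-subspace of V with L_U = L_W, then there exists a nonzero scalar λ ∈ L such that U = λ·W = {λ·w : w ∈ W}. -/

import Mathlib

def IsHScattered (K L V : Type*) [Field K] [Field L] [Algebra K L]
    [AddCommGroup V] [Module L V] [Module K V] [IsScalarTower K L V]
    (h : ℕ) (U : Submodule K V) : Prop :=
  Submodule.span L (U : Set V) = ⊤ ∧
  ∀ S : Submodule L V, Module.finrank L S = h →
    Module.finrank K ↥(U ⊓ S.restrictScalars K) ≤ h

/-- The linear set defined by the `K`-subspace `U`: the set of one-dimensional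
`L`-subspaces spanned by the nonzero vectors of `U`. -/
def linSet (K L V : Type*) [Field K] [Field L] [Algebra K L]
    [AddCommGroup V] [Module L V] [Module K V] [IsScalarTower K L V]
    (U : Submodule K V) : Set (Submodule L V) :=
  {P | ∃ u ∈ U, u ≠ 0 ∧ P = Submodule.span L {u}}

section Aux

variable {K L V : Type*} [Field K] [Field L] [Algebra K L]
    [AddCommGroup V] [Module L V] [Module K V] [IsScalarTower K L V]

/-- If `U` spans `V` over `L` and `dim_L V ≥ 2`, then `U` is not contained in a single
`L`-line. -/
lemma aux_exists_not_mem [FiniteDimensional L V] (U : Submodule K V)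
    (hspan : Submodule.span L (U : Set V) = ⊤) (hrV : 2 ≤ Module.finrank L V) (u : V) :
    ∃ u2 ∈ U, u2 ∉ Submodule.span L ({u} : Set V) := by
  by_contra h
  push_neg at h
  have hle : Submodule.span L (U : Set V) ≤ Submodule.span L ({u} : Set V) :=
    Submodule.span_le.mpr fun x hx => h x hx
  rw [hspan] at hle
  have h1 : Module.finrank L V ≤ 1 := by
    apply finrank_le_one u
    intro w
    have hw : w ∈ Submodule.span L ({u} : Set V) := hle Submodule.mem_top
    exact Submodule.mem_span_singleton.mp hw
  omega

/-- Weight lemma: a 2-scattered subspace meets every `L`-line in a `K`-line. -/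
lemma aux_weight [FiniteDimensional L V] [FiniteDimensional K V] (U : Submodule K V)
    (hU : IsHScattered K L V 2 U) (hrV : 2 ≤ Module.finrank L V)
    {u v : V} (hu : u ∈ U) (hu0 : u ≠ 0) (hv : v ∈ U)
    (hvs : v ∈ Submodule.span L ({u} : Set V)) : ∃ k : K, v = k • u := by
  by_contra h
  push_neg at h
  obtain ⟨u2, hu2U, hu2⟩ := aux_exists_not_mem U hU.1 hrV u
  -- L-independence of u2, u
  have hliL : LinearIndependent L ![u2, u] := by
    rw [linearIndependent_fin2]
    refine ⟨by simpa using hu0, fun a ha => hu2 ?_⟩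
    have ha' : a • u = u2 := by simpa using ha
    rw [← ha']
    exact Submodule.smul_mem _ _ (Submodule.mem_span_singleton_self u)
  set S : Submodule L V := Submodule.span L (Set.range ![u2, u]) with hSdef
  have hS2 : Module.finrank L ↥S = 2 := by
    rw [hSdef, finrank_span_eq_card hliL]; simp
  have hfr := hU.2 S hS2
  -- K-independence of u2, v, u
  have hli2 : LinearIndependent K ![v, u] := by
    rw [linearIndependent_fin2]
    refine ⟨by simpa using hu0, fun a ha => ?_⟩
    exact h a (by simpa using ha.symm)
  have hli3 : LinearIndependent K ![u2, v, u] := by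
    have : (![u2, v, u] : Fin 3 → V) = Fin.cons u2 ![v, u] := rfl
    rw [this, linearIndependent_fin_cons]
    refine ⟨hli2, fun hmem => ?_⟩
    apply hu2
    have hsub : Submodule.span K (Set.range ![v, u]) ≤
        (Submodule.span L ({u} : Set V)).restrictScalars K := by
      rw [Submodule.span_le]
      rintro x ⟨i, rfl⟩
      fin_cases i
      · simpa using hvs
      · simpa using Submodule.mem_span_singleton_self u
    exact hsub hmem
  have hsub : Submodule.span K (Set.range ![u2, v, u]) ≤ U ⊓ S.restrictScalars K := by
    rw [Submodule.span_le]
    rintro x ⟨i, rfl⟩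
    fin_cases i
    · exact ⟨hu2U, Submodule.subset_span ⟨0, rfl⟩⟩
    · refine ⟨hv, ?_⟩
      have : (Submodule.span L ({u} : Set V)) ≤ S :=
        Submodule.span_mono (by intro x hx; exact ⟨1, by simpa using hx.symm⟩)
      exact this hvs
    · exact ⟨hu, Submodule.subset_span ⟨1, rfl⟩⟩
  have h3 : 3 ≤ Module.finrank K ↥(U ⊓ S.restrictScalars K) := by
    have := Submodule.finrank_mono hsub
    rwa [finrank_span_eq_card hli3, Fintype.card_fin] at this
  omega

/-- Pair ratio lemma. -/
lemma aux_pair [FiniteDimensional K V] (U W : Submodule K V) (hU : IsHScattered K L V 2 U)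
    (hWU : ∀ x ∈ W, x ≠ 0 → ∃ u ∈ U, ∃ c : L, x = c • u)
    {a b : V} (ha : a ∈ U) (hb : b ∈ U) (hli : LinearIndependent L ![a, b])
    {μ ν : L} (hwa : μ • a ∈ W) (hwb : ν • b ∈ W) (hν : ν ≠ 0) :
    ∃ k : K, μ = algebraMap K L k * ν := by
  by_cases hμ : μ = 0
  · exact ⟨0, by simp [hμ]⟩
  have hliK : LinearIndependent K ![a, b] :=
    hli.restrict_scalars' K
  have hx : μ • a + ν • b ∈ W := W.add_mem hwa hwb
  have hx0 : μ • a + ν • b ≠ 0 := by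
    intro h0
    exact hμ ((LinearIndependent.pair_iff.mp hli μ ν h0).1)
  obtain ⟨u', hu'U, c, hc⟩ := hWU _ hx hx0
  have hc0 : c ≠ 0 := by rintro rfl; rw [zero_smul] at hc; exact hx0 hc
  set S : Submodule L V := Submodule.span L (Set.range ![a, b]) with hSdef
  have haS : a ∈ S := Submodule.subset_span ⟨0, rfl⟩
  have hbS : b ∈ S := Submodule.subset_span ⟨1, rfl⟩
  have hu'S : u' ∈ S := by
    have hmem : μ • a + ν • b ∈ S := S.add_mem (S.smul_mem _ haS) (S.smul_mem _ hbS)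
    rw [hc] at hmem
    have := S.smul_mem c⁻¹ hmem
    rwa [inv_smul_smul₀ hc0] at this
  have hS2 : Module.finrank L ↥S = 2 := by
    rw [hSdef, finrank_span_eq_card hli]; simp
  have hfr := hU.2 S hS2
  have hle : Submodule.span K (Set.range ![a, b]) ≤ U ⊓ S.restrictScalars K := by
    rw [Submodule.span_le]
    rintro x ⟨i, rfl⟩
    fin_cases i
    · exact ⟨ha, haS⟩
    · exact ⟨hb, hbS⟩
  have heq : Submodule.span K (Set.range ![a, b]) = U ⊓ S.restrictScalars K := by
    apply Submodule.eq_of_le_of_finrank_le hle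
    rw [finrank_span_eq_card hliK, Fintype.card_fin]
    exact hfr
  have hu'' : u' ∈ Submodule.span K (Set.range ![a, b]) := by
    rw [heq]; exact ⟨hu'U, hu'S⟩
  have hrange : (Set.range ![a, b] : Set V) = {a, b} := by
    simp [Matrix.range_cons, Matrix.range_empty, Set.pair_comm]
  rw [hrange] at hu''
  obtain ⟨s, t, hst⟩ := Submodule.mem_span_pair.mp hu''
  -- rewrite hc
  have hc' : μ • a + ν • b = (c * algebraMap K L s) • a + (c * algebraMap K L t) • b := by
    rw [hc, ← hst, smul_add, ← algebraMap_smul L s a, ← algebraMap_smul L t b,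
      smul_smul, smul_smul]
  have hzero : (μ - c * algebraMap K L s) • a + (ν - c * algebraMap K L t) • b = 0 := by
    linear_combination (norm := module) hc'
  obtain ⟨h1, h2⟩ := LinearIndependent.pair_iff.mp hli _ _ hzero
  have hμeq : μ = c * algebraMap K L s := by rwa [sub_eq_zero] at h1
  have hνeq : ν = c * algebraMap K L t := by rwa [sub_eq_zero] at h2
  have ht0 : algebraMap K L t ≠ 0 := by
    intro h0; rw [hνeq, h0, mul_zero] at hν; exact hν rfl
  have ht0' : t ≠ 0 := fun h0 => ht0 (by rw [h0, map_zero])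
  refine ⟨s * t⁻¹, ?_⟩
  rw [hμeq, hνeq, map_mul, map_inv₀]
  field_simp

end Aux

theorem stmt12 (n r : ℕ) (K L V : Type*) [Field K] [Fintype K] [Field L] [Algebra K L]
    [AddCommGroup V] [Module L V] [Module K V] [IsScalarTower K L V]
    [FiniteDimensional K L] [FiniteDimensional L V]
    (hn : Module.finrank K L = n) (hr : Module.finrank L V = r) (hr3 : 3 ≤ r)
    (U : Submodule K V) (hU : IsHScattered K L V 2 U)
    (W : Submodule K V) (hUW : linSet K L V U = linSet K L V W) :
    ∃ l : L, l ≠ 0 ∧ (U : Set V) = (fun w => l • w) '' (W : Set V) := by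
  haveI : FiniteDimensional K V := FiniteDimensional.trans K L V
  have hrV : 2 ≤ Module.finrank L V := by omega
  -- from U to W through linSet
  have dirUW : ∀ u ∈ U, u ≠ 0 → ∃ w ∈ W, ∃ c : L, c ≠ 0 ∧ w = c • u := by
    intro u huU hu0
    have hP : Submodule.span L ({u} : Set V) ∈ linSet K L V W := by
      rw [← hUW]; exact ⟨u, huU, hu0, rfl⟩
    obtain ⟨w, hwW, hw0, hPw⟩ := hP
    have hwmem : w ∈ Submodule.span L ({u} : Set V) := by
      rw [hPw]; exact Submodule.mem_span_singleton_self w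
    obtain ⟨c, hc⟩ := Submodule.mem_span_singleton.mp hwmem
    refine ⟨w, hwW, c, fun h0 => hw0 (by rw [← hc, h0, zero_smul]), hc.symm⟩
  have dirWU : ∀ w ∈ W, w ≠ 0 → ∃ u ∈ U, ∃ c : L, c ≠ 0 ∧ w = c • u := by
    intro w hwW hw0
    have hP : Submodule.span L ({w} : Set V) ∈ linSet K L V U := by
      rw [hUW]; exact ⟨w, hwW, hw0, rfl⟩
    obtain ⟨u, huU, hu0, hPu⟩ := hP
    have hwmem : w ∈ Submodule.span L ({u} : Set V) := by
      rw [← hPu]; exact Submodule.mem_span_singleton_self w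
    obtain ⟨c, hc⟩ := Submodule.mem_span_singleton.mp hwmem
    refine ⟨u, huU, c, fun h0 => hw0 (by rw [← hc, h0, zero_smul]), hc.symm⟩
  have hWU' : ∀ x ∈ W, x ≠ 0 → ∃ u ∈ U, ∃ c : L, x = c • u := by
    intro x hx hx0
    obtain ⟨u, huU, c, _, hc⟩ := dirWU x hx hx0
    exact ⟨u, huU, c, hc⟩
  -- pick u1 ∈ U nonzero
  have hU0 : ∃ u1 ∈ U, u1 ≠ (0 : V) := by
    by_contra h
    push_neg at h
    have : (U : Set V) ⊆ {0} := fun x hx => h x hx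
    have hle : Submodule.span L (U : Set V) ≤ Submodule.span L ({0} : Set V) :=
      Submodule.span_mono this
    rw [hU.1, Submodule.span_zero_singleton] at hle
    have : Module.finrank L V = 0 := by
      have : (⊤ : Submodule L V) = ⊥ := le_bot_iff.mp hle
      rw [← finrank_top L V, this, finrank_bot]
    omega
  obtain ⟨u1, hu1U, hu10⟩ := hU0
  obtain ⟨w1, hw1W, c1, hc10, hw1⟩ := dirUW u1 hu1U hu10
  -- auxiliary: linear independence from non-membership
  have mkLI : ∀ x y : V, x ≠ 0 → y ∉ Submodule.span L ({x} : Set V) →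
      LinearIndependent L ![y, x] := by
    intro x y hx0 hy
    rw [linearIndependent_fin2]
    refine ⟨by simpa using hx0, fun a ha => hy ?_⟩
    have ha' : a • x = y := by simpa using ha
    rw [← ha']
    exact Submodule.smul_mem _ _ (Submodule.mem_span_singleton_self x)
  have mkLI' : ∀ x y : V, x ≠ 0 → y ∉ Submodule.span L ({x} : Set V) →
      LinearIndependent L ![x, y] := by
    intro x y hx0 hy
    rw [linearIndependent_fin2]
    constructor
    · intro h0; exact hy (by rw [show y = (0:V) by simpa using h0]; exact Submodule.zero_mem _)
    · intro a ha
      have hy0 : y ≠ 0 := fun h0 =>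
        hy (by rw [h0]; exact Submodule.zero_mem _)
      have ha0 : a ≠ 0 := by
        intro h0; rw [h0, zero_smul] at ha; exact hx0 ha.symm
      apply hy
      rw [show y = a⁻¹ • x by rw [← show a • y = x by simpa using ha, smul_smul,
        inv_mul_cancel₀ ha0, one_smul]]
      exact Submodule.smul_mem _ _ (Submodule.mem_span_singleton_self x)
  -- claim 1 : c1⁻¹ • w ∈ U for all w ∈ W
  have claim1 : ∀ w ∈ W, c1⁻¹ • w ∈ U := by
    intro w hwW
    by_cases hw0 : w = 0
    · rw [hw0, smul_zero]; exact U.zero_mem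
    obtain ⟨u, huU, μ, hμ0, hμ⟩ := dirWU w hwW hw0
    have hu0 : u ≠ 0 := by
      intro h0; rw [h0, smul_zero] at hμ; exact hw0 hμ
    by_cases hmem : u ∈ Submodule.span L ({u1} : Set V)
    · -- dependent case
      obtain ⟨k0, hk0⟩ := aux_weight U hU hrV hu1U hu10 huU hmem
      have hk00 : k0 ≠ 0 := by
        intro h0; rw [h0, zero_smul] at hk0; exact hu0 hk0
      obtain ⟨u2, hu2U, hu2⟩ := aux_exists_not_mem U hU.1 hrV u1
      have hu20 : u2 ≠ 0 := fun h0 => hu2 (by rw [h0]; exact Submodule.zero_mem _)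
      obtain ⟨w2, hw2W, c2, hc20, hw2⟩ := dirUW u2 hu2U hu20
      -- w = μ' • u1 with μ' = μ * algebraMap k0
      have hw' : w = (μ * algebraMap K L k0) • u1 := by
        rw [hμ, hk0, ← algebraMap_smul L k0 u1, smul_smul]
      have hμ'0 : μ * algebraMap K L k0 ≠ 0 := by
        have : algebraMap K L k0 ≠ 0 := fun h0 => hk00 ((algebraMap K L).injective
          (by rw [h0, map_zero]))
        exact mul_ne_zero hμ0 this
      -- pair (u1, u2) with scalars (μ', c2)
      obtain ⟨k3, hk3⟩ := aux_pair U W hU hWU' hu1U hu2U (mkLI' u1 u2 hu10 hu2)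
        (by rw [← hw']; exact hwW) (by rw [← hw2]; exact hw2W) hc20
      -- pair (u2, u1) with scalars (c2, c1)
      obtain ⟨k2, hk2⟩ := aux_pair U W hU hWU' hu2U hu1U (mkLI u1 u2 hu10 hu2)
        (by rw [← hw2]; exact hw2W) (by rw [← hw1]; exact hw1W) hc10
      have : c1⁻¹ • w = (k3 * k2) • u1 := by
        rw [hw', hk3, hk2, smul_smul, ← algebraMap_smul (A := L) (k3 * k2) u1, map_mul]
        congr 1
        field_simp
      rw [this]
      exact U.smul_mem _ hu1U
    · -- independent case
      obtain ⟨k, hk⟩ := aux_pair U W hU hWU' huU hu1U (mkLI u1 u hu10 hmem)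
        (by rw [← hμ]; exact hwW) (by rw [← hw1]; exact hw1W) hc10
      have : c1⁻¹ • w = k • u := by
        rw [hμ, hk, smul_smul, ← algebraMap_smul (A := L) k u]
        congr 1
        field_simp
      rw [this]
      exact U.smul_mem _ huU
  -- claim 2 : every u ∈ U is c1⁻¹ • w for some w ∈ W
  have claim2 : ∀ u ∈ U, ∃ w ∈ W, u = c1⁻¹ • w := by
    intro u huU
    by_cases hu0 : u = 0
    · exact ⟨0, W.zero_mem, by rw [hu0, smul_zero]⟩
    obtain ⟨w, hwW, μ, hμ0, hμ⟩ := dirUW u huU hu0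
    have hin : c1⁻¹ • w ∈ U := claim1 w hwW
    have hins : c1⁻¹ • w ∈ Submodule.span L ({u} : Set V) := by
      rw [hμ, smul_smul]
      exact Submodule.smul_mem _ _ (Submodule.mem_span_singleton_self u)
    obtain ⟨k, hk⟩ := aux_weight U hU hrV huU hu0 hin hins
    -- c1⁻¹ * μ = algebraMap k
    have hkeq : c1⁻¹ * μ = algebraMap K L k := by
      have h1 : (c1⁻¹ * μ) • u = algebraMap K L k • u := by
        rw [algebraMap_smul, ← hk, hμ, smul_smul]
      have := sub_eq_zero.mpr h1
      rw [← sub_smul] at this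
      rcases smul_eq_zero.mp this with h | h
      · exact sub_eq_zero.mp h
      · exact absurd h hu0
    have hk0 : k ≠ 0 := by
      intro h0
      rw [h0, map_zero] at hkeq
      exact (mul_ne_zero (inv_ne_zero hc10) hμ0) hkeq
    have hbar : algebraMap K L k ≠ 0 :=
      fun h0 => hk0 ((algebraMap K L).injective (by rw [h0, map_zero]))
    refine ⟨k⁻¹ • w, W.smul_mem _ hwW, ?_⟩
    have hcomp : c1⁻¹ • (k⁻¹ • w) = ((algebraMap K L k)⁻¹ * (c1⁻¹ * μ)) • u := by
      rw [← algebraMap_smul (A := L) k⁻¹ w, hμ, map_inv₀, smul_smul, smul_smul]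
      ring_nf
    rw [hcomp, hkeq, inv_mul_cancel₀ hbar, one_smul]
  refine ⟨c1⁻¹, inv_ne_zero hc10, ?_⟩
  ext x
  simp only [Set.mem_image, SetLike.mem_coe]
  constructor
  · intro hx
    obtain ⟨w, hwW, hw⟩ := claim2 x hx
    exact ⟨w, hwW, hw.symm⟩
  · rintro ⟨w, hwW, rfl⟩
    exact claim1 w hwW
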